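/- Let 0<q<1. Then a_k → 0 as k → ∞. -/

import Mathlib

/-- Let `0 < q < 1` and let `(a k)` satisfy the recurrence
`a 0 = 1`, `2(1-q)a_0 = q⁻¹(1-q²)a_1`, and for `k ≥ 1`,
`2(1-q^{2k+1})a_k = q⁻¹(1-q^{2k+2})a_{k+1} + q(1-q^{2k})a_{k-1}`.
Then `a_k → 0` as `k → ∞`. -/
theorem stmt1 (q : ℝ) (hq0 : 0 < q) (hq1 : q < 1) (a : ℕ → ℝ)
    (ha0 : a 0 = 1)
    (ha1 : 2 * (1 - q) * a 0 = q⁻¹ * (1 - q ^ 2) * a 1)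
    (ha : ∀ k : ℕ, 1 ≤ k →
      2 * (1 - q ^ (2 * k + 1)) * a k
        = q⁻¹ * (1 - q ^ (2 * k + 2)) * a (k + 1) + q * (1 - q ^ (2 * k)) * a (k - 1)) :
    Filter.Tendsto a Filter.atTop (nhds 0) := by
  have hqne : q ≠ 0 := ne_of_gt hq0
  have hpowpos : ∀ n : ℕ, (0:ℝ) < q ^ n := fun n => pow_pos hq0 n
  have hpowlt : ∀ n : ℕ, 1 ≤ n → q ^ n < 1 := fun n hn => pow_lt_one₀ hq0.le hq1 (by omega)
  -- c k = a k / q^k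
  set c : ℕ → ℝ := fun k => a k / q ^ k with hc
  have hac : ∀ k, a k = q ^ k * c k := by
    intro k; simp only [hc]; field_simp
  have hc0 : c 0 = 1 := by simp [hc, ha0]
  have hc1 : c 1 = 2 / (1 + q) := by
    have h1q : (1:ℝ) + q ≠ 0 := by positivity
    have := ha1
    rw [ha0] at this
    simp only [hc, pow_one]
    field_simp at this ⊢
    nlinarith [this]
  -- the c recurrence
  have hcrec : ∀ k : ℕ, (1 - q ^ (2*k+4)) * c (k+2)
      = 2 * (1 - q ^ (2*k+3)) * c (k+1) - (1 - q ^ (2*k+2)) * c k := by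
    intro k
    have h := ha (k+1) (by omega)
    simp only [Nat.add_sub_cancel] at h
    have e1 : 2*(k+1)+1 = 2*k+3 := by ring
    have e2 : 2*(k+1)+2 = 2*k+4 := by ring
    have e3 : 2*(k+1) = 2*k+2 := by ring
    rw [e1, e2, e3] at h
    field_simp at h
    rw [hac (k+2), hac (k+1), hac k] at h
    have hcancel : q^(k+2) * ((1 - q ^ (2*k+4)) * c (k+2))
        = q^(k+2) * (2 * (1 - q ^ (2*k+3)) * c (k+1) - (1 - q ^ (2*k+2)) * c k) := by
      linear_combination -h
    exact mul_left_cancel₀ (pow_ne_zero _ hqne) hcancel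
  -- w and g
  set w : ℕ → ℝ := fun k => (1 - q^(2*k+2)) * (c (k+1) - c k) with hwdef
  set g : ℕ → ℝ := fun k => (1 - ((k:ℝ)+2)*q^(2*k+2) + ((k:ℝ)+1)*q^(2*k+4))/(1+q)^2 with hgdef
  have h1q : (0:ℝ) < 1 + q := by linarith
  have hw0 : w 0 = (1-q)^2 := by
    simp only [hwdef, hc0, hc1]
    field_simp
    ring
  have hwrec : ∀ k, w (k+1) = w k + q^(2*k+2) * (1-q)^2 * c (k+1) := by
    intro k
    simp only [hwdef]
    linear_combination hcrec k
  have hg0 : g 0 = (1-q)^2 := by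
    simp only [hgdef]
    field_simp
    ring
  have hgrec : ∀ k, g (k+1) = g k + q^(2*k+2) * (1-q)^2 * ((k:ℝ)+2) := by
    intro k
    simp only [hgdef]
    push_cast
    field_simp
    ring
  have hgle : ∀ k : ℕ, g k ≤ 1 - q^(2*k+2) := by
    intro k
    have hx1 : q^(2*k+2) ≤ 1 := (hpowlt (2*k+2) (by omega)).le
    have hxpos : 0 < q^(2*k+2) := hpowpos _
    have hk0 : (0:ℝ) ≤ (k:ℝ) := Nat.cast_nonneg k
    have hA : 0 ≤ (2*q+q^2)*(1-q^(2*k+2)) := by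
      apply mul_nonneg (by nlinarith) (by linarith)
    have hB : 0 ≤ ((k:ℝ)+1)*q^(2*k+2)*(1-q^2) := by
      apply mul_nonneg (mul_nonneg (by linarith) hxpos.le) (by nlinarith)
    simp only [hgdef]
    rw [div_le_iff₀ (by positivity)]
    have hxy : q^(2*k+4) = q^(2*k+2)*q^2 := by ring
    nlinarith [hA, hB, hxy]
  -- main induction
  have main : ∀ k : ℕ, (1 ≤ c k ∧ c k ≤ (k:ℝ)+1) ∧ 0 ≤ w k ∧ w k ≤ g k := by
    intro k
    induction k with
    | zero =>
      refine ⟨⟨by rw [hc0], by rw [hc0]; norm_num⟩, ?_, ?_⟩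
      · rw [hw0]; positivity
      · rw [hw0, hg0]
    | succ n ih =>
      obtain ⟨⟨hcl, hcu⟩, hwl, hwu⟩ := ih
      have hden : 0 < 1 - q^(2*n+2) := by
        have := hpowlt (2*n+2) (by omega); linarith
      have hdn : c (n+1) - c n = w n / (1 - q^(2*n+2)) := by
        rw [eq_div_iff (ne_of_gt hden)]
        simp only [hwdef]; ring
      have hd0 : 0 ≤ c (n+1) - c n := by
        rw [hdn]; exact div_nonneg hwl hden.le
      have hd1 : c (n+1) - c n ≤ 1 := by
        rw [hdn, div_le_one hden]
        linarith [hgle n]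
      have hcnl : 1 ≤ c (n+1) := by linarith
      have hcnu : c (n+1) ≤ ((n:ℝ)+1)+1 := by linarith
      refine ⟨⟨hcnl, by push_cast; linarith⟩, ?_, ?_⟩
      · rw [hwrec n]
        have : 0 ≤ q^(2*n+2) * (1-q)^2 * c (n+1) :=
          mul_nonneg (mul_nonneg (hpowpos _).le (sq_nonneg _)) (by linarith)
        linarith
      · rw [hwrec n, hgrec n]
        have : q^(2*n+2) * (1-q)^2 * c (n+1) ≤ q^(2*n+2) * (1-q)^2 * ((n:ℝ)+2) := by
          apply mul_le_mul_of_nonneg_left (by linarith)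
          exact mul_nonneg (hpowpos _).le (sq_nonneg _)
        linarith
  -- squeeze
  have hal : ∀ k : ℕ, 0 ≤ a k := by
    intro k
    rw [hac k]
    exact mul_nonneg (hpowpos k).le (by linarith [(main k).1.1])
  have hau : ∀ k : ℕ, a k ≤ ((k:ℝ)+1) * q^k := by
    intro k
    rw [hac k]
    have := (main k).1.2
    nlinarith [hpowpos k]
  have hlim : Filter.Tendsto (fun k : ℕ => ((k:ℝ)+1) * q^k) Filter.atTop (nhds 0) := by
    have h1 := tendsto_self_mul_const_pow_of_lt_one hq0.le hq1
    have h2 := tendsto_pow_atTop_nhds_zero_of_lt_one hq0.le hq1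
    have h3 := h1.add h2
    rw [add_zero] at h3
    convert h3 using 2 with n
    ring
  exact squeeze_zero hal hau hlim
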